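/- For all X, Y ∈ ℂ³, the identity 2 Σ_{i=1}^3 |X_i Y_i|² + |X₂Y₁|² + |X₂Y₃|² + 2 Re(X₁ conj(X₂) conj(Y₁) Y₂) + 2 Re(X₂ conj(X₃) conj(Y₂) Y₃) - 2 Re(X₁ conj(X₃) conj(Y₁) Y₃) = |X₂Y₁|² + |X₂Y₃|² + |X₁ conj(Y₁) + X₂ conj(Y₂)|² + |X₁ conj(Y₁) - X₃ conj(Y₃)|² + |X₂ conj(Y₂) + X₃ conj(Y₃)|² holds; in particular the left-hand side is ≥ 0. -/

import Mathlib

open Finset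

theorem stmt12 (X Y : Fin 3 → ℂ) :
    (2 * ∑ i, ‖X i * Y i‖ ^ 2 +
      ‖X 1 * Y 0‖ ^ 2 + ‖X 1 * Y 2‖ ^ 2 +
      2 * (X 0 * (starRingEnd ℂ) (X 1) * (starRingEnd ℂ) (Y 0) * Y 1).re +
      2 * (X 1 * (starRingEnd ℂ) (X 2) * (starRingEnd ℂ) (Y 1) * Y 2).re -
      2 * (X 0 * (starRingEnd ℂ) (X 2) * (starRingEnd ℂ) (Y 0) * Y 2).re =
      ‖X 1 * Y 0‖ ^ 2 + ‖X 1 * Y 2‖ ^ 2 +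
      ‖X 0 * (starRingEnd ℂ) (Y 0) + X 1 * (starRingEnd ℂ) (Y 1)‖ ^ 2 +
      ‖X 0 * (starRingEnd ℂ) (Y 0) - X 2 * (starRingEnd ℂ) (Y 2)‖ ^ 2 +
      ‖X 1 * (starRingEnd ℂ) (Y 1) + X 2 * (starRingEnd ℂ) (Y 2)‖ ^ 2) ∧
    0 ≤ 2 * ∑ i, ‖X i * Y i‖ ^ 2 +
      ‖X 1 * Y 0‖ ^ 2 + ‖X 1 * Y 2‖ ^ 2 +
      2 * (X 0 * (starRingEnd ℂ) (X 1) * (starRingEnd ℂ) (Y 0) * Y 1).re +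
      2 * (X 1 * (starRingEnd ℂ) (X 2) * (starRingEnd ℂ) (Y 1) * Y 2).re -
      2 * (X 0 * (starRingEnd ℂ) (X 2) * (starRingEnd ℂ) (Y 0) * Y 2).re := by
  have key : ∀ z : ℂ, ‖z‖ ^ 2 = z.re ^ 2 + z.im ^ 2 := by
    intro z
    rw [← Complex.normSq_eq_norm_sq, Complex.normSq_apply]
    ring
  have heq : 2 * ∑ i, ‖X i * Y i‖ ^ 2 +
      ‖X 1 * Y 0‖ ^ 2 + ‖X 1 * Y 2‖ ^ 2 +
      2 * (X 0 * (starRingEnd ℂ) (X 1) * (starRingEnd ℂ) (Y 0) * Y 1).re +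
      2 * (X 1 * (starRingEnd ℂ) (X 2) * (starRingEnd ℂ) (Y 1) * Y 2).re -
      2 * (X 0 * (starRingEnd ℂ) (X 2) * (starRingEnd ℂ) (Y 0) * Y 2).re =
      ‖X 1 * Y 0‖ ^ 2 + ‖X 1 * Y 2‖ ^ 2 +
      ‖X 0 * (starRingEnd ℂ) (Y 0) + X 1 * (starRingEnd ℂ) (Y 1)‖ ^ 2 +
      ‖X 0 * (starRingEnd ℂ) (Y 0) - X 2 * (starRingEnd ℂ) (Y 2)‖ ^ 2 +
      ‖X 1 * (starRingEnd ℂ) (Y 1) + X 2 * (starRingEnd ℂ) (Y 2)‖ ^ 2 := by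
    simp only [Fin.sum_univ_three, key, Complex.mul_re, Complex.mul_im, Complex.sub_re,
      Complex.sub_im, Complex.add_re, Complex.add_im, Complex.conj_re, Complex.conj_im]
    ring
  exact ⟨heq, heq ▸ by positivity⟩
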